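/- Let V be a 4n-dimensional real vector space with I,J,K satisfying the quaternionic identities, n > 1. The map sending a triple of 1-forms (α,β,γ) to α∧Ω_I + β∧Ω_J + γ∧Ω_K ∈ Λ³V* is injective, where Ω_I, Ω_J, Ω_K are the Kähler 2-forms of I,J,K with respect to a compatible inner product. -/

import Mathlib

open RealInnerProductSpace

lemma wedge_aux {V : Type*} [NormedAddCommGroup V]
    [InnerProductSpace ℝ V] [FiniteDimensional ℝ V]
    (hdim : 8 ≤ Module.finrank ℝ V)
    (I J K : V →ₗ[ℝ] V)
    (hIorth : ∀ x y : V, (inner ℝ (I x) (I y) : ℝ) = inner ℝ x y)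
    (hJorth : ∀ x y : V, (inner ℝ (J x) (J y) : ℝ) = inner ℝ x y)
    (hKorth : ∀ x y : V, (inner ℝ (K x) (K y) : ℝ) = inner ℝ x y)
    (hI2 : ∀ x : V, I (I x) = -x)
    (hJ2 : ∀ x : V, J (J x) = -x)
    (hK2 : ∀ x : V, K (K x) = -x)
    (hIJ : ∀ x : V, I (J x) = K x)
    (hJI : ∀ x : V, J (I x) = -K x)
    (hJK : ∀ x : V, J (K x) = I x)
    (hKJ : ∀ x : V, K (J x) = -I x)
    (hKI : ∀ x : V, K (I x) = J x)
    (hIK : ∀ x : V, I (K x) = -J x)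
    (α β γ : V →ₗ[ℝ] ℝ)
    (hzero : ∀ X Y Z : V,
      (α X * (inner ℝ (I Y) Z : ℝ) - α Y * (inner ℝ (I X) Z : ℝ) + α Z * (inner ℝ (I X) Y : ℝ))
      + (β X * (inner ℝ (J Y) Z : ℝ) - β Y * (inner ℝ (J X) Z : ℝ) + β Z * (inner ℝ (J X) Y : ℝ))
      + (γ X * (inner ℝ (K Y) Z : ℝ) - γ Y * (inner ℝ (K X) Z : ℝ) + γ Z * (inner ℝ (K X) Y : ℝ))
        = 0) :
    α = 0 := by
  -- skew-adjointness
  have skewI : ∀ x y : V, (inner ℝ (I x) y : ℝ) = -inner ℝ x (I y) := by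
    intro x y
    have h := hIorth x (I y)
    rw [hI2, inner_neg_right] at h
    linarith
  have skewJ : ∀ x y : V, (inner ℝ (J x) y : ℝ) = -inner ℝ x (J y) := by
    intro x y
    have h := hJorth x (J y)
    rw [hJ2, inner_neg_right] at h
    linarith
  have skewK : ∀ x y : V, (inner ℝ (K x) y : ℝ) = -inner ℝ x (K y) := by
    intro x y
    have h := hKorth x (K y)
    rw [hK2, inner_neg_right] at h
    linarith
  have zJ : ∀ y : V, (inner ℝ y (J y) : ℝ) = 0 := by
    intro y
    have h := skewJ y y
    have h2 := real_inner_comm (J y) y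
    linarith
  have zK : ∀ y : V, (inner ℝ y (K y) : ℝ) = 0 := by
    intro y
    have h := skewK y y
    have h2 := real_inner_comm (K y) y
    linarith
  -- the key pointwise identity
  have key : ∀ Y X : V, (inner ℝ Y Y : ℝ) = 1 →
      α X = α Y * inner ℝ X Y + α (I Y) * (inner ℝ X (I Y) : ℝ)
        + (β (I Y) - γ Y) * (inner ℝ X (J Y) : ℝ)
        + (β Y + γ (I Y)) * (inner ℝ X (K Y) : ℝ) := by
    intro Y X hY
    have h := hzero X Y (I Y)
    have e1 : (inner ℝ (I Y) (I Y) : ℝ) = 1 := by rw [hIorth]; exact hY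
    have e2 : (inner ℝ (I X) (I Y) : ℝ) = inner ℝ X Y := hIorth X Y
    have e3 : (inner ℝ (I X) Y : ℝ) = -inner ℝ X (I Y) := skewI X Y
    have e4 : (inner ℝ (J Y) (I Y) : ℝ) = 0 := by
      have h1 := skewJ Y (I Y)
      rw [hJI, inner_neg_right] at h1
      rw [h1, zK]; ring
    have e5 : (inner ℝ (J X) (I Y) : ℝ) = inner ℝ X (K Y) := by
      have h1 := skewJ X (I Y)
      rw [hJI, inner_neg_right] at h1
      linarith
    have e6 : (inner ℝ (J X) Y : ℝ) = -inner ℝ X (J Y) := skewJ X Y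
    have e7 : (inner ℝ (K Y) (I Y) : ℝ) = 0 := by
      have h1 := skewK Y (I Y)
      rw [hKI] at h1
      rw [h1, zJ]; ring
    have e8 : (inner ℝ (K X) (I Y) : ℝ) = -inner ℝ X (J Y) := by
      have h1 := skewK X (I Y)
      rw [hKI] at h1
      linarith
    have e9 : (inner ℝ (K X) Y : ℝ) = -inner ℝ X (K Y) := skewK X Y
    rw [e1, e2, e3, e4, e5, e6, e7, e8, e9] at h
    linarith
  -- pick a unit vector Y₁
  have hnt : Nontrivial V := by
    have : 0 < Module.finrank ℝ V := by omega
    exact Module.finrank_pos_iff.mp this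
  obtain ⟨y, hy⟩ := exists_ne (0 : V)
  have hny : ‖y‖ ≠ 0 := norm_ne_zero_iff.mpr hy
  set Y₁ : V := ‖y‖⁻¹ • y with hY₁def
  have hY₁ : (inner ℝ Y₁ Y₁ : ℝ) = 1 := by
    rw [hY₁def, real_inner_smul_left, real_inner_smul_right, real_inner_self_eq_norm_sq]
    field_simp
  -- the quaternionic span of Y₁
  classical
  set s : Finset V := {Y₁, I Y₁, J Y₁, K Y₁} with hsdef
  set W : Submodule ℝ V := Submodule.span ℝ (s : Set V) with hWdef
  have hWfr : Module.finrank ℝ W ≤ 4 := by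
    have h1 : Module.finrank ℝ W ≤ s.card := finrank_span_finset_le_card s
    have h2 : s.card ≤ 4 := by
      rw [hsdef]
      apply le_trans (Finset.card_insert_le _ _)
      have h3 := Finset.card_insert_le (I Y₁) ({J Y₁, K Y₁} : Finset V)
      have h4 := Finset.card_insert_le (J Y₁) ({K Y₁} : Finset V)
      simp only [Finset.card_singleton] at h3 h4 ⊢
      omega
    omega
  -- a unit vector orthogonal to W
  have hWne : Wᗮ ≠ ⊥ := by
    intro hbot
    rw [Submodule.orthogonal_eq_bot_iff] at hbot
    have h3 := finrank_top ℝ V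
    rw [← hbot] at h3
    omega
  obtain ⟨y₂, hy₂mem, hy₂⟩ := Submodule.exists_mem_ne_zero_of_ne_bot hWne
  have hny₂ : ‖y₂‖ ≠ 0 := norm_ne_zero_iff.mpr hy₂
  set Y₂ : V := ‖y₂‖⁻¹ • y₂ with hY₂def
  have hY₂mem : Y₂ ∈ Wᗮ := Submodule.smul_mem _ _ hy₂mem
  have hY₂ : (inner ℝ Y₂ Y₂ : ℝ) = 1 := by
    rw [hY₂def, real_inner_smul_left, real_inner_smul_right, real_inner_self_eq_norm_sq]
    field_simp
  -- base orthogonality relations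
  have hb : ∀ w ∈ W, (inner ℝ w Y₂ : ℝ) = 0 := fun w hw =>
    (Submodule.mem_orthogonal W Y₂).mp hY₂mem w hw
  have hb1 : (inner ℝ Y₁ Y₂ : ℝ) = 0 := hb _ (Submodule.subset_span (by rw [hsdef]; simp))
  have hb2 : (inner ℝ (I Y₁) Y₂ : ℝ) = 0 := hb _ (Submodule.subset_span (by rw [hsdef]; simp))
  have hb3 : (inner ℝ (J Y₁) Y₂ : ℝ) = 0 := hb _ (Submodule.subset_span (by rw [hsdef]; simp))
  have hb4 : (inner ℝ (K Y₁) Y₂ : ℝ) = 0 := hb _ (Submodule.subset_span (by rw [hsdef]; simp))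
  have hspan : ∀ a b c d : ℝ,
      (inner ℝ (a • Y₁ + b • I Y₁ + c • J Y₁ + d • K Y₁) Y₂ : ℝ) = 0 := by
    intro a b c d
    simp [inner_add_left, real_inner_smul_left, hb1, hb2, hb3, hb4]
  -- the Riesz vector of α
  set a : ℝ := α Y₁
  set b : ℝ := α (I Y₁)
  set c : ℝ := β (I Y₁) - γ Y₁
  set d : ℝ := β Y₁ + γ (I Y₁)
  set v : V := a • Y₁ + b • I Y₁ + c • J Y₁ + d • K Y₁ with hvdef
  have hv : ∀ X : V, α X = inner ℝ X v := by
    intro X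
    rw [hvdef]
    simp only [inner_add_right, real_inner_smul_right]
    exact key Y₁ X hY₁
  -- v is orthogonal to Y₂, I Y₂, J Y₂, K Y₂
  have hIv : I v = (-b) • Y₁ + a • I Y₁ + (-d) • J Y₁ + c • K Y₁ := by
    rw [hvdef]
    simp only [map_add, map_smul, hI2 Y₁, hIJ Y₁, hIK Y₁]
    module
  have hJv : J v = (-c) • Y₁ + d • I Y₁ + a • J Y₁ + (-b) • K Y₁ := by
    rw [hvdef]
    simp only [map_add, map_smul, hJ2 Y₁, hJI Y₁, hJK Y₁]
    module
  have hKv : K v = (-d) • Y₁ + (-c) • I Y₁ + b • J Y₁ + a • K Y₁ := by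
    rw [hvdef]
    simp only [map_add, map_smul, hK2 Y₁, hKI Y₁, hKJ Y₁]
    module
  have o0 : (inner ℝ v Y₂ : ℝ) = 0 := hspan a b c d
  have o1 : (inner ℝ v (I Y₂) : ℝ) = 0 := by
    have h := skewI v Y₂
    rw [hIv] at h
    have := hspan (-b) a (-d) c
    linarith
  have o2 : (inner ℝ v (J Y₂) : ℝ) = 0 := by
    have h := skewJ v Y₂
    rw [hJv] at h
    have := hspan (-c) d a (-b)
    linarith
  have o3 : (inner ℝ v (K Y₂) : ℝ) = 0 := by
    have h := skewK v Y₂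
    rw [hKv] at h
    have := hspan (-d) (-c) b a
    linarith
  -- conclude v = 0
  have hαv : α v = 0 := by
    rw [key Y₂ v hY₂, o0, o1, o2, o3]; ring
  have hvv : (inner ℝ v v : ℝ) = 0 := by rw [← hv v]; exact hαv
  have hv0 : v = 0 := by
    rwa [inner_self_eq_zero] at hvv
  ext X
  rw [LinearMap.zero_apply, hv X, hv0, inner_zero_right]

/-- on a `4n`-dimensional (`n ≥ 2`) inner ℝ product space with orthogonal
complex structures `I, J, K` satisfying the quaternionic identities, the map
`(α,β,γ) ↦ α∧Ω_I + β∧Ω_J + γ∧Ω_K` into `Λ³V*` is injective.  The wedge of a 1-form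
`α` with a 2-form `Ω` is written out as
`(α∧Ω)(X,Y,Z) = α(X)Ω(Y,Z) - α(Y)Ω(X,Z) + α(Z)Ω(X,Y)`, and `Ω_I(X,Y) = ⟨IX,Y⟩` etc. -/
theorem wedge_with_kaehler_forms_injective {V : Type*} [NormedAddCommGroup V]
    [InnerProductSpace ℝ V] [FiniteDimensional ℝ V]
    (n : ℕ) (hn : 2 ≤ n) (hdim : Module.finrank ℝ V = 4 * n)
    (I J K : V →ₗ[ℝ] V)
    (hIorth : ∀ x y : V, (inner ℝ (I x) (I y) : ℝ) = inner ℝ x y)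
    (hJorth : ∀ x y : V, (inner ℝ (J x) (J y) : ℝ) = inner ℝ x y)
    (hKorth : ∀ x y : V, (inner ℝ (K x) (K y) : ℝ) = inner ℝ x y)
    (hI2 : ∀ x : V, I (I x) = -x)
    (hJ2 : ∀ x : V, J (J x) = -x)
    (hK2 : ∀ x : V, K (K x) = -x)
    (hIJK : ∀ x : V, I (J (K x)) = -x)
    (α β γ : V →ₗ[ℝ] ℝ)
    (hzero : ∀ X Y Z : V,
      (α X * (inner ℝ (I Y) Z : ℝ) - α Y * (inner ℝ (I X) Z : ℝ) + α Z * (inner ℝ (I X) Y : ℝ))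
      + (β X * (inner ℝ (J Y) Z : ℝ) - β Y * (inner ℝ (J X) Z : ℝ) + β Z * (inner ℝ (J X) Y : ℝ))
      + (γ X * (inner ℝ (K Y) Z : ℝ) - γ Y * (inner ℝ (K X) Z : ℝ) + γ Z * (inner ℝ (K X) Y : ℝ))
        = 0) :
    α = 0 ∧ β = 0 ∧ γ = 0 := by
  have hdim8 : 8 ≤ Module.finrank ℝ V := by omega
  -- derive the six composition identities
  have hIJ : ∀ x : V, I (J x) = K x := by
    intro x
    have h := hIJK (K x)
    rw [hK2, map_neg, map_neg] at h
    -- h : -(I (J x)) = -(K x)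
    have := neg_injective h
    exact this
  have hJK : ∀ x : V, J (K x) = I x := by
    intro x
    have h := congrArg I (hIJK x)
    rw [hI2, map_neg] at h
    exact neg_injective h
  have hKI : ∀ x : V, K (I x) = J x := by
    intro x
    have h1 : J (K (I x)) = -x := by rw [hJK, hI2]
    have h := congrArg J h1
    rw [hJ2, map_neg] at h
    exact neg_injective h
  have hJI : ∀ x : V, J (I x) = -K x := by
    intro x
    have h1 : I x = J (K x) := (hJK x).symm
    rw [h1, hJ2]
  have hKJ : ∀ x : V, K (J x) = -I x := by
    intro x
    have h1 : J x = K (I x) := (hKI x).symm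
    rw [h1, hK2]
  have hIK : ∀ x : V, I (K x) = -J x := by
    intro x
    have h1 : K x = I (J x) := (hIJ x).symm
    rw [h1, hI2]
  refine ⟨?_, ?_, ?_⟩
  · exact wedge_aux hdim8 I J K hIorth hJorth hKorth hI2 hJ2 hK2
      hIJ hJI hJK hKJ hKI hIK α β γ hzero
  · exact wedge_aux hdim8 J K I hJorth hKorth hIorth hJ2 hK2 hI2
      hJK hKJ hKI hIK hIJ hJI β γ α (fun X Y Z => by linarith [hzero X Y Z])
  · exact wedge_aux hdim8 K I J hKorth hIorth hJorth hK2 hI2 hJ2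
      hKI hIK hIJ hJI hJK hKJ γ α β (fun X Y Z => by linarith [hzero X Y Z])
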